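/- arXiv:1905.10685 — 4 statements merged into one kernel-verified Lean document; each statement's English description precedes it below -/
import Mathlib

section
/- Let V be a finite-dimensional vector space, ω : V → V an operator satisfying the Lefschetz property with middle weight k with respect to two increasing filtrations F_• and F_•'. If F_i ⊆ F_i' for all i, then F_• = F_•'. -/
/-- `ω` has degree 2 and satisfies the Lefschetz property with middle weight `k₀` with
respect to the finite increasing filtration `F` of `V`. -/
def IsLefschetzIncFiltration {k : Type*} [Field k] {V : Type*} [AddCommGroup V]
    [Module k V] (ω : V →ₗ[k] V) (F : ℤ → Submodule k V) (k₀ : ℤ) : Prop :=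
  Monotone F ∧
  (∃ N : ℕ, (∀ i : ℤ, i ≤ -(N : ℤ) → F i = ⊥) ∧ (∀ i : ℤ, (N : ℤ) ≤ i → F i = ⊤)) ∧
  (∀ i : ℤ, (F i).map ω ≤ F (i + 2)) ∧
  (∀ i : ℕ, 0 < i →
    ((F (k₀ - i)).map (ω ^ i) ⊔ F (k₀ + i - 1) = F (k₀ + i)) ∧
    (∀ x ∈ F (k₀ - i), (ω ^ i) x ∈ F (k₀ + i - 1) → x ∈ F (k₀ - i - 1)))


open Submodule Module

section aux
variable {k : Type*} [Field k] {V : Type*} [AddCommGroup V] [Module k V]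

/-- element form of iterated degree bound -/
lemma pow_mem_aux (ω : V →ₗ[k] V) (F : ℤ → Submodule k V)
    (hdeg : ∀ i : ℤ, (F i).map ω ≤ F (i + 2)) (n : ℕ) (m : ℤ) {x : V}
    (hx : x ∈ F m) : (ω ^ n) x ∈ F (m + 2 * n) := by
  induction n with
  | zero => simpa using hx
  | succ n ih =>
      have h : (ω ^ (n + 1)) x = ω ((ω ^ n) x) := by
        rw [pow_succ']; rfl
      rw [h]
      have := hdeg (m + 2 * n) ⟨_, ih, rfl⟩
      have e : (m + 2 * (n : ℤ)) + 2 = m + 2 * ((n : ℕ) + 1 : ℕ) := by push_cast; ring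
      rwa [e] at this

variable [FiniteDimensional k V]

lemma key_aux (ω : V →ₗ[k] V) (F : ℤ → Submodule k V) (k₀ : ℤ)
    (hF : IsLefschetzIncFiltration ω F k₀) (j : ℕ) (hj : 0 < j) :
    finrank k (F (k₀ - j)) + finrank k (F (k₀ + j - 1)) =
      finrank k (F (k₀ - j - 1)) + finrank k (F (k₀ + j)) := by
  obtain ⟨hmono, _, hdeg, hlef⟩ := hF
  set A := F (k₀ - j)
  set B := F (k₀ + j - 1)
  set C := F (k₀ + j)
  set D := F (k₀ - j - 1)
  have hDA : D ≤ A := hmono (by omega)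
  have hBC : B ≤ C := hmono (by omega)
  set f : A →ₗ[k] V ⧸ B := B.mkQ ∘ₗ (ω ^ j) ∘ₗ A.subtype with hf
  set g : C →ₗ[k] V ⧸ B := B.mkQ ∘ₗ C.subtype with hg
  have hkerf : LinearMap.ker f = comap A.subtype D := by
    ext ⟨x, hx⟩
    simp only [hf, LinearMap.mem_ker, LinearMap.comp_apply, Submodule.coe_subtype,
      Submodule.mkQ_apply, Submodule.Quotient.mk_eq_zero, Submodule.mem_comap]
    constructor
    · intro h
      exact (hlef j hj).2 x hx h
    · intro h
      have := pow_mem_aux ω F hdeg j (k₀ - j - 1) h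
      have e : (k₀ - j - 1) + 2 * (j : ℤ) = k₀ + j - 1 := by ring
      rwa [e] at this
  have hkerg : LinearMap.ker g = comap C.subtype B := by
    ext ⟨x, hx⟩
    simp [hg]
  have hrange : LinearMap.range f = LinearMap.range g := by
    rw [hf, hg, LinearMap.range_comp, LinearMap.range_comp, LinearMap.range_comp,
      Submodule.range_subtype, Submodule.range_subtype]
    have hsup := (hlef j hj).1
    have : Submodule.map B.mkQ (Submodule.map (ω ^ j) A ⊔ B) = Submodule.map B.mkQ C := by
      rw [hsup]
    rwa [Submodule.map_sup, Submodule.mkQ_map_self, sup_bot_eq] at this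
  have h1 := LinearMap.finrank_range_add_finrank_ker f
  have h2 := LinearMap.finrank_range_add_finrank_ker g
  have e1 : finrank k (LinearMap.ker f) = finrank k D := by
    rw [hkerf]; exact (Submodule.comapSubtypeEquivOfLe hDA).finrank_eq
  have e2 : finrank k (LinearMap.ker g) = finrank k B := by
    rw [hkerg]; exact (Submodule.comapSubtypeEquivOfLe hBC).finrank_eq
  rw [e1] at h1
  rw [e2, ← hrange] at h2
  omega
lemma sum_aux (ω : V →ₗ[k] V) (F : ℤ → Submodule k V) (k₀ : ℤ)
    (hF : IsLefschetzIncFiltration ω F k₀) (i : ℕ) :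
    finrank k (F (k₀ + i)) + finrank k (F (k₀ - i - 1)) = finrank k V := by
  obtain ⟨N, hbot, htop⟩ := hF.2.1
  set M := N + k₀.natAbs + 1 with hM
  suffices H : ∀ m i : ℕ, M ≤ i + m →
      finrank k (F (k₀ + i)) + finrank k (F (k₀ - i - 1)) = finrank k V by
    exact H M i (by omega)
  intro m
  induction m with
  | zero =>
      intro i hi
      have ht : F (k₀ + i) = ⊤ := htop _ (by omega)
      have hb : F (k₀ - i - 1) = ⊥ := hbot _ (by omega)
      rw [ht, hb, finrank_top, finrank_bot]
      omega
  | succ m ih =>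
      intro i hi
      by_cases hc : M ≤ i + m
      · exact ih i hc
      · have hih := ih (i + 1) (by omega)
        have hkey := key_aux ω F k₀ hF (i + 1) (Nat.succ_pos i)
        rw [Nat.cast_succ] at hih hkey
        rw [show k₀ + ((i : ℤ) + 1) - 1 = k₀ + i by ring] at hkey
        rw [show k₀ - ((i : ℤ) + 1) = k₀ - i - 1 by ring] at hkey hih
        omega

end aux

/-- If `ω` satisfies the Lefschetz property with the same middle weight `k₀` with respect
to two increasing filtrations `F` and `F'`, and `F_i ⊆ F'_i` for all `i`, then `F = F'`. -/
theorem stmt_2 {k : Type*} [Field k] {V : Type*} [AddCommGroup V] [Module k V]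
    [FiniteDimensional k V] (ω : V →ₗ[k] V) (F F' : ℤ → Submodule k V) (k₀ : ℤ)
    (hF : IsLefschetzIncFiltration ω F k₀) (hF' : IsLefschetzIncFiltration ω F' k₀)
    (hle : ∀ i : ℤ, F i ≤ F' i) : F = F' := by
  funext i
  apply Submodule.eq_of_le_of_finrank_eq (hle i)
  rcases le_or_gt k₀ i with h | h
  · set n := (i - k₀).toNat with hn
    have e : (n : ℤ) = i - k₀ := Int.toNat_of_nonneg (by omega)
    have h1 := sum_aux ω F k₀ hF n
    have h1' := sum_aux ω F' k₀ hF' n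
    rw [show k₀ + (n : ℤ) = i by omega,
      show k₀ - (n : ℤ) - 1 = 2 * k₀ - i - 1 by omega] at h1 h1'
    have m1 := Submodule.finrank_mono (hle i)
    have m2 := Submodule.finrank_mono (hle (2 * k₀ - i - 1))
    omega
  · set n := (k₀ - i - 1).toNat with hn
    have e : (n : ℤ) = k₀ - i - 1 := Int.toNat_of_nonneg (by omega)
    have h1 := sum_aux ω F k₀ hF n
    have h1' := sum_aux ω F' k₀ hF' n
    rw [show k₀ - (n : ℤ) - 1 = i by omega,
      show k₀ + (n : ℤ) = 2 * k₀ - i - 1 by omega] at h1 h1'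
    have m1 := Submodule.finrank_mono (hle i)
    have m2 := Submodule.finrank_mono (hle (2 * k₀ - i - 1))
    omega
end

section
/- For a finite-dimensional vector space V with increasing filtration F_• and operator ω : V → V of degree 2 satisfying the Lefschetz property with middle weight k, the following are equivalent: (1) the Deligne splitting satisfies ω^{i+1} Q^{i,0} = 0 for all i ≥ 0; (2) there exists a grading V = ⊕_i G_i with ω G_i ⊆ G_{i+2} and F_i = ⊕_{j ≤ i} G_j; (3) the monodromic filtration of ω splits F_•. -/
/-- Lefschetz property with middle weight `k₀` with respect to a decreasing filtration;
for a given nilpotent `ω` such a filtration is unique, the monodromic filtration. -/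
def IsLefschetzDecFiltrationAt {k : Type*} [Field k] {V : Type*} [AddCommGroup V]
    [Module k V] (ω : V →ₗ[k] V) (M : ℤ → Submodule k V) (k₀ : ℤ) : Prop :=
  Antitone M ∧
  (∃ N : ℕ, (∀ i : ℤ, i ≤ -(N : ℤ) → M i = ⊤) ∧ (∀ i : ℤ, (N : ℤ) ≤ i → M i = ⊥)) ∧
  (∀ i : ℤ, (M i).map ω ≤ M (i + 2)) ∧
  (∀ i : ℕ, 0 < i →
    ((M (k₀ - i)).map (ω ^ i) ⊔ M (k₀ + i + 1) = M (k₀ + i)) ∧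
    (∀ x ∈ M (k₀ - i), (ω ^ i) x ∈ M (k₀ + i + 1) → x ∈ M (k₀ - i + 1)))

/-- `Q` is a Deligne splitting for `(F, ω)` with middle weight `k₀`. -/
def IsDeligneSplitting {k : Type*} [Field k] {V : Type*} [AddCommGroup V]
    [Module k V] (ω : V →ₗ[k] V) (F : ℤ → Submodule k V) (k₀ : ℤ)
    (Q : ℕ → ℕ → Submodule k V) : Prop :=
  (∀ i j : ℕ, i < j → Q i j = ⊥) ∧
  iSupIndep (fun p : ℕ × ℕ => Q p.1 p.2) ∧
  (⨆ p : ℕ × ℕ, Q p.1 p.2) = ⊤ ∧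
  (∀ m : ℤ, F m = ⨆ (i : ℕ) (j : ℕ) (_ : j ≤ i ∧ k₀ - i + 2 * j ≤ m), Q i j) ∧
  (∀ i j : ℕ, j ≤ i →
    (Q i 0).map (ω ^ j) = Q i j ∧ ∀ x ∈ Q i 0, (ω ^ j) x = 0 → x = 0) ∧
  (∀ i r : ℕ, (Q i 0).map (ω ^ (i + r + 1)) ≤ F (k₀ + i + r))


section SLhelpers
open Submodule

variable {k : Type*} [Field k] {V : Type*} [AddCommGroup V] [Module k V]


lemma SL.map_pow_le (ω : V →ₗ[k] V) (A : ℤ → Submodule k V)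
    (h : ∀ i : ℤ, (A i).map ω ≤ A (i + 2)) (c : ℕ) (m : ℤ) :
    (A m).map (ω ^ c) ≤ A (m + 2 * c) := by
  induction c generalizing m with
  | zero =>
      have h0 : m + 2*((0:ℕ):ℤ) = m := by simp
      rw [h0, pow_zero]
      exact fun x hx => by
        rcases hx with ⟨y, hy, rfl⟩
        simpa using hy
  | succ c ih =>
      have h1 : (ω ^ (c+1)) = (ω ^ c).comp ω := by
        rw [pow_succ]; rfl
      rw [h1, Submodule.map_comp]
      calc ((A m).map ω).map (ω ^ c) ≤ (A (m+2)).map (ω ^ c) := Submodule.map_mono (h m)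
        _ ≤ A (m + 2 + 2*c) := ih (m+2)
        _ = A (m + 2*(c+1)) := by ring_nf

lemma SL.pow_mem (ω : V →ₗ[k] V) (A : ℤ → Submodule k V)
    (h : ∀ i : ℤ, (A i).map ω ≤ A (i + 2)) (c : ℕ) (m : ℤ) {x : V} (hx : x ∈ A m) :
    (ω ^ c) x ∈ A (m + 2 * c) :=
  SL.map_pow_le ω A h c m ⟨x, hx, rfl⟩

lemma SL.iSup_split (A : ℤ → Submodule k V) (m : ℤ) :
    (⨆ (j : ℤ) (_ : j ≤ m), A j) = A m ⊔ ⨆ (j : ℤ) (_ : j ≤ m - 1), A j := by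
  apply le_antisymm
  · refine iSup₂_le fun j hj => ?_
    rcases eq_or_lt_of_le hj with rfl | hlt
    · exact le_sup_left
    · exact le_sup_of_le_right (le_iSup₂ (f := fun (j:ℤ) (_ : j ≤ m-1) => A j) j (by omega))
  · refine sup_le (le_iSup₂ (f := fun (j:ℤ) (_ : j ≤ m) => A j) m le_rfl) ?_
    exact iSup₂_le fun j hj => le_iSup₂ (f := fun (j:ℤ) (_ : j ≤ m) => A j) j (by omega)


lemma SL.int_descend {P : ℤ → Prop} (B : ℤ) (hbase : ∀ b, B ≤ b → P b)
    (hstep : ∀ b, (∀ b', b < b' → P b') → P b) : ∀ b, P b := by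
  have key : ∀ d : ℕ, ∀ b, B - d ≤ b → P b := by
    intro d
    induction d with
    | zero => intro b hb; exact hbase b (by omega)
    | succ d ih => intro b _; exact hstep b fun b' hb' => ih b' (by omega)
  intro b; exact key (B - b).toNat b (by omega)

lemma SL.int_ascend {P : ℤ → Prop} (B : ℤ) (hbase : ∀ b, b ≤ B → P b)
    (hstep : ∀ b, (∀ b', b' < b → P b') → P b) : ∀ b, P b := by
  have key : ∀ d : ℕ, ∀ b, b ≤ B + d → P b := by
    intro d
    induction d with
    | zero => intro b hb; exact hbase b (by omega)
    | succ d ih => intro b _; exact hstep b fun b' hb' => ih b' (by omega)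
  intro b; exact key (b - B).toNat b (by omega)

lemma SL.nat_descend {P : ℕ → Prop} (T : ℕ) (hbase : ∀ t, T ≤ t → P t)
    (hstep : ∀ t, P (t + 1) → P t) : ∀ t, P t := by
  have key : ∀ d, P (T - d) := by
    intro d
    induction d with
    | zero => exact hbase T (by omega)
    | succ d ih =>
        rcases le_or_gt (d + 1) T with h | h
        · have e : T - (d + 1) + 1 = T - d := by omega
          exact hstep _ (by rw [e]; exact ih)
        · have e : T - (d + 1) = T - d := by omega
          rw [e]; exact ih
  intro t
  rcases le_or_gt T t with h | h
  · exact hbase t h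
  · have := key (T - t)
    rwa [show T - (T - t) = t by omega] at this

/-- `ω` is nilpotent, from the boundedness of the `M`-filtration. -/
lemma SL.nilp {ω : V →ₗ[k] V} {M : ℤ → Submodule k V} {k₀ : ℤ}
    (hM : IsLefschetzDecFiltrationAt ω M k₀) :
    ∃ c₀ : ℕ, 0 < c₀ ∧ ∀ c : ℕ, c₀ ≤ c → (ω ^ c) = (0 : V →ₗ[k] V) := by
  obtain ⟨hanti, ⟨N, htop, hbot⟩, hdeg, hlef⟩ := hM
  refine ⟨N + k₀.natAbs + 1, by omega, fun c hc => ?_⟩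
  ext x
  have hx : x ∈ M (k₀ - c) := by
    rw [htop (k₀ - c) (by omega)]; trivial
  have h2 : (ω ^ c) x ∈ M (k₀ - c + 2 * c) := SL.pow_mem ω M hdeg c _ hx
  have h3 : M (k₀ - c + 2 * c) = ⊥ := hbot _ (by omega)
  rw [h3] at h2
  simpa using h2

/-- kernels of powers of `ω` are bounded in the monodromic filtration. -/
lemma SL.ker_le {ω : V →ₗ[k] V} {M : ℤ → Submodule k V} {k₀ : ℤ}
    (hM : IsLefschetzDecFiltrationAt ω M k₀) (n : ℕ) (hn : 0 < n) :
    LinearMap.ker (ω ^ n) ≤ M (k₀ - n + 1) := by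
  obtain ⟨hanti, ⟨N, htop, hbot⟩, hdeg, hlef⟩ := hM
  have key : ∀ t : ℕ, LinearMap.ker (ω ^ n) ≤ M (k₀ - (n + t) + 1) := by
    refine SL.nat_descend (N + k₀.natAbs + 1) (fun t ht => ?_) (fun t ih => ?_)
    · intro x _
      rw [htop (k₀ - (n + t) + 1) (by omega)]; trivial
    · intro x hx
      have hx' : x ∈ M (k₀ - ((n + t : ℕ) : ℤ)) := by
        have h := ih hx
        convert h using 2
        all_goals push_cast
        all_goals ring
      have hzero : (ω ^ (n + t)) x = 0 := by
        rw [add_comm n t, pow_add, Module.End.mul_apply,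
          LinearMap.mem_ker.mp hx, map_zero]
      have h2 := (hlef (n + t) (by omega)).2 x hx' (by rw [hzero]; exact zero_mem _)
      convert h2 using 2
      all_goals push_cast
      all_goals ring
  have h := key 0
  intro x hx
  have := h hx
  convert this using 2
  all_goals push_cast
  all_goals ring

/-- range-kernel intersections are bounded below in the monodromic filtration. -/
lemma SL.rangeKer_le {ω : V →ₗ[k] V} {M : ℤ → Submodule k V} {k₀ : ℤ}
    (hM : IsLefschetzDecFiltrationAt ω M k₀) (j n : ℕ) (hn : 0 < n) :
    LinearMap.range (ω ^ j) ⊓ LinearMap.ker (ω ^ n) ≤ M (k₀ + j + 1 - n) := by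
  rintro x ⟨⟨y, rfl⟩, hker⟩
  have hy : y ∈ LinearMap.ker (ω ^ (n + j)) := by
    rw [LinearMap.mem_ker, pow_add, Module.End.mul_apply]
    exact LinearMap.mem_ker.mp hker
  have h1 : y ∈ M (k₀ - (n + j) + 1) := SL.ker_le hM (n + j) (by omega) hy
  have h2 := SL.pow_mem ω M hM.2.2.1 j _ h1
  convert h2 using 2
  all_goals push_cast
  all_goals ring

lemma SL.finsupp_zero {ι : Type*} {A : ι → Submodule k V} (h : iSupIndep A)
    (f : ι →₀ V) (hf : ∀ i, f i ∈ A i) (hsum : (f.sum fun _ x => x) = 0) : f = 0 := by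
  classical
  have hinj := h.dfinsupp_lsum_injective
  set g : Π₀ i, A i := DFinsupp.mk f.support (fun i => ⟨f i.1, hf i.1⟩) with hg
  have hgsum : (DFinsupp.lsum ℕ (M := fun i => ↥(A i)) fun i => (A i).subtype) g = 0 := by
    rw [DFinsupp.lsum_apply_apply, DFinsupp.sumAddHom_apply]
    simp only [LinearMap.toAddMonoidHom_coe, Submodule.coe_subtype]
    rw [← hsum]
    refine Finset.sum_congr ?_ fun i hi => ?_
    · ext i
      simp [hg, DFinsupp.mem_support_iff, Finsupp.mem_support_iff, DFinsupp.mk_apply]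
    · simp [hg, DFinsupp.mk_apply, hi]
  have hg0 : g = 0 := hinj (by rw [hgsum]; exact (map_zero _).symm)
  ext i
  by_cases hi : i ∈ f.support
  · have h1 : (g i : V) = f i := by simp [hg, DFinsupp.mk_apply, hi]
    rw [hg0] at h1
    simpa using h1.symm
  · simpa using Finsupp.notMem_support_iff.mp hi

lemma SL.fiber_indep {ι κ : Type*} (A : ι → Submodule k V) (hA : iSupIndep A)
    (φ : ι → κ) : iSupIndep fun c => ⨆ (i) (_ : φ i = c), A i := by
  classical
  intro c
  refine Submodule.disjoint_def.mpr fun x hx1 hx2 => ?_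
  obtain ⟨f, hf, hfsum⟩ := (Submodule.mem_iSup_iff_exists_finsupp _ _).mp hx1
  have hfA : ∀ i, f i ∈ A i := fun i => (iSup_le fun _ => le_rfl : (⨆ (_ : φ i = c), A i) ≤ A i) (hf i)
  have hf0 : ∀ i, φ i ≠ c → f i = 0 := by
    intro i hi
    have := hf i
    rw [show (⨆ (_ : φ i = c), A i) = ⊥ by simp [hi]] at this
    simpa using this
  have hx2' : x ∈ ⨆ (i) (_ : φ i ≠ c), A i := by
    refine (iSup₂_le fun c' hc' => iSup₂_le fun i hi => ?_ : (⨆ (c') (_ : c' ≠ c), ⨆ (i) (_ : φ i = c'), A i) ≤ _) hx2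
    exact le_iSup₂_of_le i (hi ▸ hc') le_rfl
  obtain ⟨g, hg, hgsum⟩ := (Submodule.mem_iSup_iff_exists_finsupp _ _).mp hx2'
  have hgA : ∀ i, g i ∈ A i := fun i => (iSup_le fun _ => le_rfl : (⨆ (_ : φ i ≠ c), A i) ≤ A i) (hg i)
  have hg0 : ∀ i, φ i = c → g i = 0 := by
    intro i hi
    have := hg i
    rw [show (⨆ (_ : φ i ≠ c), A i) = ⊥ by simp [hi]] at this
    simpa using this
  have hsub : f - g = 0 := by
    refine SL.finsupp_zero hA (f - g) (fun i => by
      simpa using sub_mem (hfA i) (hgA i)) ?_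
    rw [Finsupp.sum_sub_index (fun a b₁ b₂ => rfl), hfsum, hgsum, sub_self]
  have hfg : f = g := by rwa [sub_eq_zero] at hsub
  have hfzero : f = 0 := by
    ext i
    by_cases hi : φ i = c
    · rw [hfg]; simp [hg0 i hi]
    · simp [hf0 i hi]
  rw [← hfsum, hfzero]
  simp

lemma SL.one_to_two {ω : V →ₗ[k] V} {F : ℤ → Submodule k V} {k₀ : ℤ}
    {Q : ℕ → ℕ → Submodule k V}
    (hQ : IsDeligneSplitting ω F k₀ Q)
    (h1 : ∀ i : ℕ, (Q i 0).map (ω ^ (i + 1)) = ⊥) :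
    ∃ G : ℤ → Submodule k V, iSupIndep G ∧ (⨆ i, G i) = ⊤ ∧
      (∀ i : ℤ, (G i).map ω ≤ G (i + 2)) ∧
      (∀ m : ℤ, F m = ⨆ (j : ℤ) (_ : j ≤ m), G j) := by
  classical
  obtain ⟨hQ0, hQind, hQtop, hQF, hQiso, hQsmall⟩ := hQ
  set φ : ℕ × ℕ → ℤ := fun p => k₀ - p.1 + 2 * p.2 with hφ
  set G : ℤ → Submodule k V := fun m => ⨆ (p : ℕ × ℕ) (_ : φ p = m), Q p.1 p.2 with hG
  have hQleG : ∀ p : ℕ × ℕ, Q p.1 p.2 ≤ G (φ p) := fun p =>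
    le_iSup₂ (f := fun (p' : ℕ × ℕ) (_ : φ p' = φ p) => Q p'.1 p'.2) p rfl
  refine ⟨G, SL.fiber_indep _ hQind φ, ?_, ?_, ?_⟩
  · apply le_antisymm le_top
    rw [← hQtop]
    exact iSup_le fun p => le_iSup_of_le (φ p) (hQleG p)
  · intro m
    rw [hG]
    simp only [Submodule.map_iSup]
    refine iSup_le fun p => iSup_le fun hp => ?_
    rcases le_or_gt p.2 p.1 with hj | hj
    · have e1 : (Q p.1 p.2).map ω = (Q p.1 0).map (ω ^ (p.2 + 1)) := by
        rw [← (hQiso p.1 p.2 hj).1, ← Submodule.map_comp]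
        congr 1
        rw [pow_succ']
        rfl
      rcases eq_or_lt_of_le hj with he | hlt
      · rw [e1, he, h1 p.1]
        exact bot_le
      · rw [e1, (hQiso p.1 (p.2 + 1) (by omega)).1]
        have : φ (p.1, p.2 + 1) = m + 2 := by rw [← hp, hφ]; push_cast; ring
        exact this ▸ hQleG (p.1, p.2 + 1)
    · rw [hQ0 p.1 p.2 hj, Submodule.map_bot]
      exact bot_le
  · intro m
    rw [hQF m]
    apply le_antisymm
    · refine iSup_le fun i => iSup_le fun j => iSup_le fun hij => ?_
      exact le_iSup₂_of_le (φ (i, j)) (by rw [hφ]; exact hij.2) (hQleG (i, j))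
    · refine iSup₂_le fun j' hj' => iSup₂_le fun p hp => ?_
      rcases le_or_gt p.2 p.1 with hj | hj
      · refine le_iSup_of_le p.1 (le_iSup_of_le p.2 (le_iSup_of_le ⟨hj, ?_⟩ le_rfl))
        simp only [hφ] at hp
        omega
      · rw [hQ0 p.1 p.2 hj]
        exact bot_le

lemma SL.two_to_three {ω : V →ₗ[k] V} {F M : ℤ → Submodule k V} {k₀ : ℤ}
    (hF : IsLefschetzIncFiltration ω F k₀)
    (hM : IsLefschetzDecFiltrationAt ω M k₀)
    (h2 : ∃ G : ℤ → Submodule k V, iSupIndep G ∧ (⨆ i, G i) = ⊤ ∧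
      (∀ i : ℤ, (G i).map ω ≤ G (i + 2)) ∧
      (∀ m : ℤ, F m = ⨆ (j : ℤ) (_ : j ≤ m), G j)) :
    ∀ m : ℤ, F m = ⨆ (j : ℤ) (_ : j ≤ m), F j ⊓ M j := by
  obtain ⟨G, hGind, hGtop, hGdeg, hGF⟩ := h2
  have hmono := hF.1
  obtain ⟨NF, hFbot, hFtop⟩ := hF.2.1
  have hFdeg := hF.2.2.1
  have hFlef := hF.2.2.2
  -- F m = G m ⊔ F (m - 1)
  have hsplit : ∀ m : ℤ, F m = G m ⊔ F (m - 1) := by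
    intro m
    rw [hGF m, hGF (m - 1)]
    exact SL.iSup_split G m
  have hGleF : ∀ j : ℤ, G j ≤ F j := by
    intro j
    rw [hGF j]
    exact le_iSup₂ (f := fun (j' : ℤ) (_ : j' ≤ j) => G j') j le_rfl
  have hdisj : ∀ l : ℤ, G l ⊓ F (l - 1) = ⊥ := by
    intro l
    have h1 : F (l - 1) ≤ ⨆ (j : ℤ) (_ : j ≠ l), G j := by
      rw [hGF (l - 1)]
      exact iSup₂_le fun j hj => le_iSup₂_of_le j (by omega) le_rfl
    exact disjoint_iff.mp ((hGind l).mono_right h1)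
  have hGbot : ∀ j : ℤ, j ≤ -(NF : ℤ) → G j = ⊥ := by
    intro j hj
    have := le_trans (hGleF j) (le_of_eq (hFbot j hj))
    exact le_bot_iff.mp this
  -- graded Lefschetz surjectivity
  have gsurj : ∀ i : ℕ, 0 < i → G (k₀ + i) ≤ (G (k₀ - i)).map (ω ^ i) := by
    intro i hi x hx
    have hxF : x ∈ F (k₀ + i) := hGleF _ hx
    rw [← (hFlef i hi).1] at hxF
    obtain ⟨u, hu, f, hf, huf⟩ := Submodule.mem_sup.mp hxF
    obtain ⟨h, hh, rfl⟩ := hu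
    have hhsplit : h ∈ G (k₀ - i) ⊔ F (k₀ - i - 1) := by
      rw [← hsplit (k₀ - i)]; exact hh
    obtain ⟨h₁, hh₁, h₂, hh₂, hhh⟩ := Submodule.mem_sup.mp hhsplit
    have key : x - (ω ^ i) h₁ ∈ G (k₀ + i) ⊓ F (k₀ + i - 1) := by
      constructor
      · have hω : (ω ^ i) h₁ ∈ G (k₀ + i) := by
          have := SL.pow_mem ω G hGdeg i (k₀ - i) hh₁
          rwa [show k₀ - i + 2 * (i : ℤ) = k₀ + i by ring] at this
        exact sub_mem hx hω
      · have hω2 : (ω ^ i) h₂ ∈ F (k₀ + i - 1) := by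
          have := SL.pow_mem ω F hFdeg i (k₀ - i - 1) hh₂
          rwa [show k₀ - i - 1 + 2 * (i : ℤ) = k₀ + i - 1 by ring] at this
        have : x - (ω ^ i) h₁ = (ω ^ i) h₂ + f := by
          rw [← huf, ← hhh]
          rw [map_add]
          abel
        rw [this]
        exact add_mem hω2 hf
    rw [show k₀ + (i : ℤ) - 1 = (k₀ + i) - 1 by ring, hdisj (k₀ + i)] at key
    have : x = (ω ^ i) h₁ := by
      have := (Submodule.mem_bot k).mp key
      rwa [sub_eq_zero] at this
    exact ⟨h₁, hh₁, this.symm⟩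
  -- nilpotency
  obtain ⟨c₀, hc₀pos, hc₀⟩ := SL.nilp hM
  -- the key estimate
  have starG : ∀ c : ℕ, ∀ d : ℕ, (G (k₀ - d)).map (ω ^ c) ≤ M (k₀ + 2 * c - d) := by
    refine SL.nat_descend c₀ (fun c hc => ?_) (fun c ih => ?_)
    · intro d
      rw [hc₀ c hc, Submodule.map_zero]
      exact bot_le
    · rintro d x ⟨y, hy, rfl⟩
      have hωy : (ω ^ (d + 1)) y ∈ G (k₀ + (d + 2 : ℕ)) := by
        have := SL.pow_mem ω G hGdeg (d + 1) (k₀ - d) hy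
        rwa [show k₀ - (d : ℤ) + 2 * ((d : ℕ) + 1 : ℕ) = k₀ + ((d : ℕ) + 2 : ℕ) by
          push_cast; ring] at this
      obtain ⟨z, hz, hzy⟩ := gsurj (d + 2) (by omega) hωy
      -- y' := y - ω z
      set y' : V := y - ω z with hy'
      have hker : (ω ^ (d + 1)) y' = 0 := by
        rw [hy', map_sub, ← Module.End.mul_apply, ← pow_succ]
        have : (ω ^ (d + 2)) z = (ω ^ (d + 1)) y := hzy
        rw [this, sub_self]
      have hdecomp : (ω ^ c) y = (ω ^ c) y' + (ω ^ (c + 1)) z := by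
        rw [hy', map_sub, ← Module.End.mul_apply, ← pow_succ]
        abel
      rw [hdecomp]
      apply add_mem
      · rcases le_or_gt (c : ℤ) d with hcd | hcd
        · have hn : 0 < d + 1 - c := by omega
          have hrk : (ω ^ c) y' ∈
              LinearMap.range (ω ^ c) ⊓ LinearMap.ker (ω ^ (d + 1 - c)) := by
            refine ⟨⟨y', rfl⟩, ?_⟩
            rw [SetLike.mem_coe, LinearMap.mem_ker, ← Module.End.mul_apply, ← pow_add,
              show d + 1 - c + c = d + 1 by omega, hker]
          have := SL.rangeKer_le hM c (d + 1 - c) hn hrk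
          convert this using 2
          all_goals push_cast [Nat.cast_sub (by omega : c ≤ d + 1)]
          all_goals omega
        · have : (ω ^ c) y' = 0 := by
            rw [show c = (c - (d + 1)) + (d + 1) by omega, pow_add,
              Module.End.mul_apply, hker, map_zero]
          rw [this]
          exact zero_mem _
      · have := ih (d + 2) ⟨z, hz, rfl⟩
        convert this using 2
        all_goals push_cast
        all_goals omega
  -- G j ≤ M j
  have hGleM : ∀ j : ℤ, G j ≤ M j := by
    intro j
    rcases le_or_gt j k₀ with hj | hj
    · set d : ℕ := (k₀ - j).toNat with hd
      have hjd : j = k₀ - d := by omega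
      intro x hx
      have : (ω ^ 0) x ∈ M (k₀ + 2 * (0 : ℕ) - d) := starG 0 d ⟨x, by rwa [← hjd], rfl⟩
      rw [pow_zero] at this
      simpa [← hjd, show k₀ + 2 * ((0:ℕ) : ℤ) - d = j by omega] using this
    · set e : ℕ := (j - k₀).toNat with he
      have hje : j = k₀ + e := by omega
      have he1 : 0 < e := by omega
      calc G j = G (k₀ + e) := by rw [hje]
        _ ≤ (G (k₀ - e)).map (ω ^ e) := gsurj e he1
        _ ≤ M (k₀ + 2 * e - e) := starG e e
        _ = M j := by rw [hje]; congr 1; push_cast; ring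
  -- conclude
  intro m
  apply le_antisymm
  · rw [hGF m]
    exact iSup₂_le fun j hj =>
      le_iSup₂_of_le j hj (le_inf (hGleF j) (hGleM j))
  · exact iSup₂_le fun j hj => le_trans inf_le_left (hmono hj)

lemma SL.exists_last {ω : V →ₗ[k] V} (u : V) (hu : u ≠ 0) (n : ℕ)
    (hn : (ω ^ n) u = 0) : ∃ t : ℕ, (ω ^ t) u ≠ 0 ∧ (ω ^ (t + 1)) u = 0 := by
  induction n with
  | zero => simp at hn; exact absurd hn hu
  | succ n ih =>
      by_cases h : (ω ^ n) u = 0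
      · exact ih h
      · exact ⟨n, h, hn⟩

lemma SL.three_to_one {ω : V →ₗ[k] V} {F M : ℤ → Submodule k V} {k₀ : ℤ}
    {Q : ℕ → ℕ → Submodule k V}
    (hF : IsLefschetzIncFiltration ω F k₀)
    (hQ : IsDeligneSplitting ω F k₀ Q)
    (hM : IsLefschetzDecFiltrationAt ω M k₀)
    (h3 : ∀ m : ℤ, F m = ⨆ (j : ℤ) (_ : j ≤ m), F j ⊓ M j) :
    ∀ i : ℕ, (Q i 0).map (ω ^ (i + 1)) = ⊥ := by
  have hmono := hF.1
  obtain ⟨NF, hFbot, hFtop⟩ := hF.2.1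
  have hFdeg := hF.2.2.1
  have hFlef := hF.2.2.2
  have hanti := hM.1
  obtain ⟨NM, hMtop, hMbot⟩ := hM.2.1
  have hMdeg := hM.2.2.1
  have hMlef := hM.2.2.2
  obtain ⟨c₀, hc₀pos, hc₀⟩ := SL.nilp hM
  -- recursion from (3)
  have hR : ∀ m : ℤ, F m = (F m ⊓ M m) ⊔ F (m - 1) := by
    intro m
    have h := SL.iSup_split (fun j => F j ⊓ M j) m
    rw [← h3 m, ← h3 (m - 1)] at h
    exact h
  -- joint decomposition
  have JS : ∀ w r : ℤ, F r ⊓ M w ≤ ⨆ (j : ℤ) (_ : w ≤ j), (F j ⊓ M j) := by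
    intro w
    refine SL.int_ascend (w) (fun r hr => ?_) (fun r ih => ?_)
    · exact le_trans (inf_le_inf_right _ (hmono hr))
        (le_iSup₂ (f := fun (j : ℤ) (_ : w ≤ j) => F j ⊓ M j) w le_rfl)
    · rintro x ⟨hxF, hxM⟩
      rcases le_or_gt r w with hrw | hrw
      · exact le_iSup₂ (f := fun (j : ℤ) (_ : w ≤ j) => F j ⊓ M j) w le_rfl
          ⟨hmono hrw hxF, hxM⟩
      · rw [hR r] at hxF
        obtain ⟨g, hg, f, hf, hgf⟩ := Submodule.mem_sup.mp hxF
        have hfM : f ∈ M w := by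
          have hgw : g ∈ M w := hanti (le_of_lt hrw) hg.2
          have : f = x - g := by rw [← hgf]; abel
          rw [this]
          exact sub_mem hxM hgw
        have h1 : g ∈ ⨆ (j : ℤ) (_ : w ≤ j), (F j ⊓ M j) :=
          le_iSup₂ (f := fun (j : ℤ) (_ : w ≤ j) => F j ⊓ M j) r (le_of_lt hrw) hg
        have h2 : f ∈ ⨆ (j : ℤ) (_ : w ≤ j), (F j ⊓ M j) := ih (r - 1) (by omega) ⟨hf, hfM⟩
        rw [← hgf]
        exact add_mem h1 h2
  -- the key vanishing
  have A2 : ∀ b a : ℤ, a < b → F a ⊓ M b = ⊥ := by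
    refine SL.int_descend (NM) (fun b hb a _ => ?_) (fun b IH => ?_)
    · rw [hMbot b hb, inf_bot_eq]
    · -- positive-side statement
      have Pos : k₀ + 1 ≤ b → F (b - 1) ⊓ M b = ⊥ := by
        intro hb
        set s : ℕ := (b - k₀).toNat with hsdef
        have hs : (s : ℤ) = b - k₀ := by omega
        have hspos : 0 < s := by omega
        rw [eq_bot_iff]
        rintro x ⟨hxF, hxM⟩
        -- x is killed by ω
        have hker : ω x = 0 := by
          have h1 : ω x ∈ F (b + 1) := by
            have := hFdeg (b - 1) ⟨x, hxF, rfl⟩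
            rwa [show b - 1 + 2 = b + 1 by ring] at this
          have h2 : ω x ∈ M (b + 2) := hMdeg b ⟨x, hxM, rfl⟩
          have := IH (b + 2) (by omega) (b + 1) (by omega)
          have hmem : ω x ∈ F (b + 1) ⊓ M (b + 2) := ⟨h1, h2⟩
          rw [this] at hmem
          simpa using hmem
        -- joint surjectivity
        have hsurj : M b = (M (k₀ - s)).map (ω ^ s) ⊔ M (b + 1) := by
          have := (hMlef s hspos).1
          rw [show k₀ + (s : ℤ) = b by omega] at this
          exact this.symm
        have hmapT : ((⨆ (j : ℤ) (_ : k₀ - (s:ℤ) ≤ j), (F j ⊓ M j)).map (ω ^ s)) ≤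
            ((F (k₀ - s) ⊓ M (k₀ - s)).map (ω ^ s)) ⊔ M (b + 1) := by
          simp only [Submodule.map_iSup]
          refine iSup_le fun j => iSup_le fun hj => ?_
          rcases eq_or_lt_of_le hj with rfl | hjlt
          · exact le_sup_left
          · refine le_sup_of_le_right ?_
            calc (F j ⊓ M j).map (ω ^ s) ≤ (M j).map (ω ^ s) :=
                  Submodule.map_mono inf_le_right
              _ ≤ M (j + 2 * s) := SL.map_pow_le ω M hMdeg s j
              _ ≤ M (b + 1) := hanti (by omega)
        rw [hsurj] at hxM
        obtain ⟨v, hv, x', hx', hvx⟩ := Submodule.mem_sup.mp hxM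
        obtain ⟨y, hy, rfl⟩ := hv
        have hyT : (ω ^ s) y ∈
            ((F (k₀ - s) ⊓ M (k₀ - s)).map (ω ^ s)) ⊔ M (b + 1) := by
          apply hmapT
          refine Submodule.mem_map_of_mem ?_
          have hyF : y ∈ F (NF) := by rw [hFtop NF le_rfl]; trivial
          exact JS (k₀ - s) NF ⟨hyF, hy⟩
        obtain ⟨w₁, hw₁, w₂, hw₂, hww⟩ := Submodule.mem_sup.mp hyT
        obtain ⟨g, hg, rfl⟩ := hw₁
        -- x = ω^s g + (w₂ + x')
        have hxdecomp : x = (ω ^ s) g + (w₂ + x') := by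
          rw [← hvx, ← hww]; abel
        have hw2x' : w₂ + x' ∈ M (b + 1) := add_mem hw₂ hx'
        have hw2F : w₂ + x' ∈ F b := by
          have h1 : (ω ^ s) g ∈ F b := by
            have := SL.pow_mem ω F hFdeg s (k₀ - s) hg.1
            rwa [show k₀ - (s:ℤ) + 2 * s = b by omega] at this
          have h2 : x ∈ F b := hmono (by omega) hxF
          have : w₂ + x' = x - (ω ^ s) g := by rw [hxdecomp]; abel
          rw [this]
          exact sub_mem h2 h1
        have hw20 : w₂ + x' = 0 := by
          have := IH (b + 1) (by omega) b (by omega)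
          have hmem : w₂ + x' ∈ F b ⊓ M (b + 1) := ⟨hw2F, hw2x'⟩
          rw [this] at hmem
          simpa using hmem
        have hxg : x = (ω ^ s) g := by rw [hxdecomp, hw20, add_zero]
        -- descent: g ∈ F (k₀ - c - 1) for all c ≥ s
        have descent : ∀ c : ℕ, s ≤ c → g ∈ F (k₀ - c - 1) := by
          intro c hc
          induction c, hc using Nat.le_induction with
          | base =>
              refine (hFlef s hspos).2 g hg.1 ?_
              rw [show k₀ + (s:ℤ) - 1 = b - 1 by omega, ← hxg]
              exact hxF
          | succ c hc ih =>
              have hg' : g ∈ F (k₀ - ((c + 1 : ℕ) : ℤ)) := by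
                convert ih using 2
                push_cast
                ring
              have hzero : (ω ^ (c + 1)) g = 0 := by
                have h1 : (ω ^ (c + 1)) g = (ω ^ (c + 1 - s)) ((ω ^ s) g) := by
                  rw [← Module.End.mul_apply, ← pow_add,
                    show c + 1 - s + s = c + 1 by omega]
                rw [h1, ← hxg, show c + 1 - s = (c - s) + 1 by omega, pow_succ,
                  Module.End.mul_apply, hker, map_zero]
              refine (hFlef (c + 1) (by omega)).2 g hg' ?_
              rw [hzero]
              exact zero_mem _
        have hgzero : g = 0 := by
          have hc := descent (s + NF + k₀.natAbs) (by omega)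
          rw [hFbot _ (by omega)] at hc
          simpa using hc
        rw [hxg, hgzero, map_zero]
        exact Submodule.zero_mem ⊥
      -- negative side
      have Neg : ∀ a : ℤ, a ≤ k₀ - 1 → a < b → F a ⊓ M b = ⊥ := by
        refine SL.int_ascend (-(NF : ℤ)) (fun a ha _ _ => ?_) (fun a ih ha1 ha2 => ?_)
        · rw [hFbot a ha, bot_inf_eq]
        · rw [eq_bot_iff]
          rintro x ⟨hxF, hxM⟩
          set i : ℕ := (k₀ - a).toNat with hidef
          have hi : (i : ℤ) = k₀ - a := by omega
          have hipos : 0 < i := by omega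
          have h1 : (ω ^ i) x ∈ F (k₀ + i) := by
            have := SL.pow_mem ω F hFdeg i a hxF
            rwa [show a + 2 * (i : ℤ) = k₀ + i by omega] at this
          have h2 : (ω ^ i) x ∈ M (b + 2 * i) := SL.pow_mem ω M hMdeg i b hxM
          have hzero : (ω ^ i) x = 0 := by
            have heq := IH (b + 2 * i) (by omega) (k₀ + i) (by omega)
            have hmem : (ω ^ i) x ∈ F (k₀ + i) ⊓ M (b + 2 * i) := ⟨h1, h2⟩
            rw [heq] at hmem
            simpa using hmem
          have hxa : x ∈ F (a - 1) := by
            have := (hFlef i hipos).2 x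
              (by rwa [show k₀ - (i : ℤ) = a by omega])
              (by rw [hzero]; exact zero_mem _)
            rwa [show k₀ - (i : ℤ) - 1 = a - 1 by omega] at this
          have heq := ih (a - 1) (by omega) (by omega) (by omega)
          have hmem : x ∈ F (a - 1) ⊓ M b := ⟨hxa, hxM⟩
          rw [heq] at hmem
          simpa using hmem
      intro a ha
      rcases le_or_gt a (k₀ - 1) with hak | hak
      · exact Neg a hak ha
      · have hbk : k₀ + 1 ≤ b := by omega
        rw [eq_bot_iff]
        rintro x ⟨hxF, hxM⟩
        have hmem : x ∈ F (b - 1) ⊓ M b := ⟨hmono (by omega) hxF, hxM⟩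
        rw [Pos hbk] at hmem
        simpa using hmem
  -- conclusion
  intro i
  rw [eq_bot_iff]
  rintro u ⟨x, hx, rfl⟩
  suffices h : (ω ^ (i + 1)) x = 0 by
    rw [h]; exact Submodule.zero_mem ⊥
  by_contra hu
  obtain ⟨t, ht, ht1⟩ := SL.exists_last ((ω ^ (i + 1)) x) hu c₀
    (by rw [← Module.End.mul_apply, ← pow_add, hc₀ (c₀ + (i + 1)) (by omega)]; rfl)
  set z : V := (ω ^ t) ((ω ^ (i + 1)) x) with hz
  have hzx : z = (ω ^ (i + t + 1)) x := by
    rw [hz, ← Module.End.mul_apply, ← pow_add,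
      show t + (i + 1) = i + t + 1 from by omega]
  have hzF : z ∈ F (k₀ + i + t) := hQ.2.2.2.2.2 i t ⟨x, hx, hzx.symm⟩
  have hzM : z ∈ M (k₀ + i + t + 1) := by
    have hrk : z ∈ LinearMap.range (ω ^ (i + t + 1)) ⊓ LinearMap.ker (ω ^ 1) := by
      refine ⟨⟨x, hzx.symm⟩, ?_⟩
      rw [SetLike.mem_coe, LinearMap.mem_ker, pow_one, hz, ← Module.End.mul_apply,
        ← pow_succ']
      exact ht1
    have := SL.rangeKer_le hM (i + t + 1) 1 one_pos hrk
    convert this using 2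
    push_cast
    ring
  have heq := A2 (k₀ + i + t + 1) (k₀ + i + t) (by omega)
  have hmem : z ∈ F (k₀ + i + t) ⊓ M (k₀ + i + t + 1) := ⟨hzF, hzM⟩
  rw [heq] at hmem
  exact ht (by simpa [hz] using hmem)

end SLhelpers

/-- The split Lefschetz property: equivalence of
(1) `ω^{i+1} Q^{i,0} = 0` for all `i ≥ 0` (in the Deligne splitting);
(2) existence of a grading `V = ⊕ G_i` with `ω G_i ⊆ G_{i+2}` and `F_i = ⊕_{j≤i} G_j`;
(3) the monodromic filtration `M` of `ω` splits `F`. -/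
theorem stmt_3 {k : Type*} [Field k] {V : Type*} [AddCommGroup V] [Module k V]
    [FiniteDimensional k V] (ω : V →ₗ[k] V) (F M : ℤ → Submodule k V) (k₀ : ℤ)
    (Q : ℕ → ℕ → Submodule k V)
    (hF : IsLefschetzIncFiltration ω F k₀)
    (hQ : IsDeligneSplitting ω F k₀ Q)
    (hM : IsLefschetzDecFiltrationAt ω M k₀) :
    ((∀ i : ℕ, (Q i 0).map (ω ^ (i + 1)) = ⊥) ↔
      (∃ G : ℤ → Submodule k V, iSupIndep G ∧ (⨆ i, G i) = ⊤ ∧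
        (∀ i : ℤ, (G i).map ω ≤ G (i + 2)) ∧
        (∀ m : ℤ, F m = ⨆ (j : ℤ) (_ : j ≤ m), G j))) ∧
    ((∃ G : ℤ → Submodule k V, iSupIndep G ∧ (⨆ i, G i) = ⊤ ∧
        (∀ i : ℤ, (G i).map ω ≤ G (i + 2)) ∧
        (∀ m : ℤ, F m = ⨆ (j : ℤ) (_ : j ≤ m), G j)) ↔
      (∀ m : ℤ, F m = ⨆ (j : ℤ) (_ : j ≤ m), F j ⊓ M j)) := by
  refine ⟨⟨fun h1 => SL.one_to_two hQ h1,
    fun h2 => SL.three_to_one hF hQ hM (SL.two_to_three hF hM h2)⟩,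
    ⟨fun h2 => SL.two_to_three hF hM h2,
    fun h3 => SL.one_to_two hQ (SL.three_to_one hF hQ hM h3)⟩⟩
end

section
/- Let f, g, h : X → GL_n(ℂ) be smooth maps from a smooth manifold (or smooth morphisms from a smooth algebraic variety), and define the 2-form (f|g) := trace(f^{-1} df ∧ dg g^{-1}). Then the 2-cocycle identity holds: (f | g·h) + (g | h) = (f·g | h) + (f | g), where f·g denotes the pointwise matrix product. -/
attribute [local instance] Matrix.normedAddCommGroup Matrix.normedSpace

/-- For maps `f, g : X → GL_n(ℂ)`, the scalar 2-form `(f|g) = trace(f⁻¹ df ∧ dg g⁻¹)`,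
evaluated at a point `x` on a pair of tangent vectors `(v, w)`. -/
noncomputable def pairForm {E : Type*} [NormedAddCommGroup E] [NormedSpace ℂ E] {n : ℕ}
    (f g : E → Matrix (Fin n) (Fin n) ℂ) (x v w : E) : ℂ :=
  ((f x)⁻¹ * fderiv ℂ f x v * fderiv ℂ g x w * (g x)⁻¹).trace
    - ((f x)⁻¹ * fderiv ℂ f x w * fderiv ℂ g x v * (g x)⁻¹).trace

noncomputable def mulCLM {n : ℕ} :
    Matrix (Fin n) (Fin n) ℂ →L[ℂ] Matrix (Fin n) (Fin n) ℂ →L[ℂ] Matrix (Fin n) (Fin n) ℂ :=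
  LinearMap.toContinuousLinearMap
    { toFun := fun a => LinearMap.toContinuousLinearMap (LinearMap.mulLeft ℂ a)
      map_add' := by intro a b; ext x; simp [add_mul]
      map_smul' := by intro c a; ext x; simp [smul_mul_assoc] }

@[simp] lemma mulCLM_apply {n : ℕ} (a b : Matrix (Fin n) (Fin n) ℂ) :
    mulCLM a b = a * b := rfl

lemma fderiv_matrix_mul {E : Type*} [NormedAddCommGroup E] [NormedSpace ℂ E] {n : ℕ}
    (f g : E → Matrix (Fin n) (Fin n) ℂ) (x v : E)
    (hf : DifferentiableAt ℂ f x) (hg : DifferentiableAt ℂ g x) :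
    fderiv ℂ (fun y => f y * g y) x v
      = fderiv ℂ f x v * g x + f x * fderiv ℂ g x v := by
  have hB : IsBoundedBilinearMap ℂ
      (fun p : Matrix (Fin n) (Fin n) ℂ × Matrix (Fin n) (Fin n) ℂ => p.1 * p.2) := by
    refine { add_left := fun a b c => add_mul a b c
             smul_left := fun c a b => smul_mul_assoc c a b
             add_right := fun a b c => mul_add a b c
             smul_right := fun c a b => mul_smul_comm c a b
             bound := ⟨n + 1, by positivity, fun a b => ?_⟩ }
    rw [Matrix.norm_le_iff (by positivity)]
    intro i j
    rw [Matrix.mul_apply]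
    calc ‖∑ k, a i k * b k j‖ ≤ ∑ k, ‖a i k * b k j‖ := norm_sum_le _ _
      _ ≤ ∑ _k : Fin n, ‖a‖ * ‖b‖ := by
          gcongr with k
          rw [norm_mul]
          exact mul_le_mul (Matrix.norm_entry_le_entrywise_sup_norm a)
            (Matrix.norm_entry_le_entrywise_sup_norm b) (norm_nonneg _) (norm_nonneg _)
      _ = n * (‖a‖ * ‖b‖) := by simp
      _ ≤ (n + 1) * ‖a‖ * ‖b‖ := by
          rw [mul_assoc]
          exact mul_le_mul_of_nonneg_right (by linarith) (by positivity)
  have hd := (hB.hasFDerivAt (f x, g x)).comp x (hf.hasFDerivAt.prodMk hg.hasFDerivAt)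
  rw [show (fun y => f y * g y) = (fun p : Matrix (Fin n) (Fin n) ℂ × Matrix (Fin n) (Fin n) ℂ =>
      p.1 * p.2) ∘ (fun y => (f y, g y)) from rfl]
  refine (congrArg (fun L => L v) hd.fderiv).trans ?_
  simp [IsBoundedBilinearMap.deriv_apply, add_comm]
  rfl

/-- The 2-cocycle identity `(f|gh) + (g|h) = (fg|h) + (f|g)`. -/
theorem stmt_4 {E : Type*} [NormedAddCommGroup E] [NormedSpace ℂ E] {n : ℕ}
    (f g h : E → Matrix (Fin n) (Fin n) ℂ)
    (hf : Differentiable ℂ f) (hg : Differentiable ℂ g) (hh : Differentiable ℂ h)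
    (hfu : ∀ x, IsUnit (f x)) (hgu : ∀ x, IsUnit (g x)) (hhu : ∀ x, IsUnit (h x)) :
    ∀ x v w : E,
      pairForm f (fun y => g y * h y) x v w + pairForm g h x v w
        = pairForm (fun y => f y * g y) h x v w + pairForm f g x v w := by
  intro x v w
  set a := f x with ha
  set b := g x with hb
  set c := h x with hc
  have hbinv : b * b⁻¹ = 1 := Matrix.mul_nonsing_inv b ((Matrix.isUnit_iff_isUnit_det b).mp (hgu x))
  have hcinv : c * c⁻¹ = 1 := Matrix.mul_nonsing_inv c ((Matrix.isUnit_iff_isUnit_det c).mp (hhu x))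
  have hgh : ∀ u : E, fderiv ℂ (fun y => g y * h y) x u
      = fderiv ℂ g x u * c + b * fderiv ℂ h x u := fun u =>
    fderiv_matrix_mul g h x u (hg x) (hh x)
  have hfg : ∀ u : E, fderiv ℂ (fun y => f y * g y) x u
      = fderiv ℂ f x u * b + a * fderiv ℂ g x u := fun u =>
    fderiv_matrix_mul f g x u (hf x) (hg x)
  set A := fderiv ℂ f x v
  set A' := fderiv ℂ f x w
  set B := fderiv ℂ g x v
  set B' := fderiv ℂ g x w
  set C := fderiv ℂ h x v
  set C' := fderiv ℂ h x w
  simp only [pairForm, hgh, hfg, ← hb, ← hc, ← ha, Matrix.mul_inv_rev]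
  -- expand
  have cyc : ∀ P Q : Matrix (Fin n) (Fin n) ℂ, (P * Q).trace = (Q * P).trace :=
    fun P Q => Matrix.trace_mul_comm P Q
  have cancel : ∀ P : Matrix (Fin n) (Fin n) ℂ, P * c * c⁻¹ = P := by
    intro P; rw [mul_assoc, hcinv, mul_one]
  have cancelb : ∀ P : Matrix (Fin n) (Fin n) ℂ, P * b * b⁻¹ = P := by
    intro P; rw [mul_assoc, hbinv, mul_one]
  simp only [mul_add, add_mul, Matrix.trace_add, mul_assoc]
  rw [show a⁻¹ * (A * (B' * (c * (c⁻¹ * b⁻¹)))) = a⁻¹ * (A * (B' * b⁻¹)) by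
        rw [← mul_assoc c, hcinv, one_mul],
      show a⁻¹ * (A' * (B * (c * (c⁻¹ * b⁻¹)))) = a⁻¹ * (A' * (B * b⁻¹)) by
        rw [← mul_assoc c, hcinv, one_mul]]
  have hainv : a⁻¹ * a = 1 := Matrix.nonsing_inv_mul a ((Matrix.isUnit_iff_isUnit_det a).mp (hfu x))
  have cyc1 : (a⁻¹ * (A * (b * (C' * (c⁻¹ * b⁻¹))))).trace
      = (b⁻¹ * (a⁻¹ * (A * (b * (C' * c⁻¹))))).trace := by
    rw [show a⁻¹ * (A * (b * (C' * (c⁻¹ * b⁻¹)))) = (a⁻¹ * (A * (b * (C' * c⁻¹)))) * b⁻¹ by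
      noncomm_ring, Matrix.trace_mul_comm]
  have cyc2 : (a⁻¹ * (A' * (b * (C * (c⁻¹ * b⁻¹))))).trace
      = (b⁻¹ * (a⁻¹ * (A' * (b * (C * c⁻¹))))).trace := by
    rw [show a⁻¹ * (A' * (b * (C * (c⁻¹ * b⁻¹)))) = (a⁻¹ * (A' * (b * (C * c⁻¹)))) * b⁻¹ by
      noncomm_ring, Matrix.trace_mul_comm]
  rw [cyc1, cyc2]
  simp only [← mul_assoc a⁻¹ a, hainv, one_mul]
  ring
end

section
/- For 1 ≤ i ≤ n-1 and z in the field, let f_i(z) = τ_i·(Id + z·e_{i,i+1}) ∈ GL_n, where τ_i is the permutation matrix of the transposition (i, i+1). Then f_1(z₁) f_2(z₂) f_1(z₃) = f_2(z₃) f_1(z₂ - z₁z₃) f_2(z₁) (braid relation inside 3×3 blocks), and f_i(z) f_j(w) = f_j(w) f_i(z) whenever |i - j| > 1. Hence the assignment σ_i ↦ (z ↦ f_i(z)) defines a representation of the positive braid monoid Br_n^+ on parametrized families of matrices. -/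
/-- The matrix `f_i(z) = τ_i (Id + z e_{i,i+1}) ∈ GL_n(K)`, where `τ_i` is the
permutation matrix of the transposition `(i, i+1)`. -/
def braidGen (K : Type*) [Field K] (n : ℕ) (i : ℕ) (hi : i + 1 < n) (z : K) :
    Matrix (Fin n) (Fin n) K :=
  (Equiv.swap (⟨i, Nat.lt_of_succ_lt hi⟩ : Fin n) ⟨i + 1, hi⟩).permMatrix K *
    (1 + Matrix.single (⟨i, Nat.lt_of_succ_lt hi⟩ : Fin n) ⟨i + 1, hi⟩ z)

section aux

open Matrix

set_option maxHeartbeats 1000000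

/-- Abstract form of the braid generator with two distinct indices. -/
private abbrev BG {K : Type*} [Field K] {n : ℕ} (a b : Fin n) (z : K) :
    Matrix (Fin n) (Fin n) K :=
  1 - single a a 1 + single a b 1 + single b a 1 +
    single b b (z - 1)

private lemma braidGen_eq_BG (K : Type*) [Field K] (n : ℕ) (i : ℕ) (hi : i + 1 < n) (z : K) :
    braidGen K n i hi z
      = BG (⟨i, Nat.lt_of_succ_lt hi⟩ : Fin n) (⟨i + 1, hi⟩ : Fin n) z := by
  unfold braidGen BG
  ext a b
  simp only [Matrix.mul_apply, Equiv.Perm.permMatrix, PEquiv.toMatrix_apply, Equiv.toPEquiv_apply,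
    Matrix.add_apply, Matrix.sub_apply, Matrix.one_apply, Matrix.single, Matrix.of_apply,
    Option.mem_def, Option.some.injEq]
  rw [Finset.sum_eq_single (Equiv.swap (⟨i, Nat.lt_of_succ_lt hi⟩ : Fin n) ⟨i + 1, hi⟩ a)]
  · rcases eq_or_ne a ⟨i, Nat.lt_of_succ_lt hi⟩ with h1 | h1
    · subst h1
      simp only [if_pos rfl, one_mul, Equiv.swap_apply_left, Fin.ext_iff, true_and, and_true]
      split_ifs <;> first | (exfalso; omega) | ring1
    rcases eq_or_ne a ⟨i+1, hi⟩ with h2 | h2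
    · subst h2
      simp only [if_pos rfl, one_mul, Equiv.swap_apply_right, Fin.ext_iff, true_and, and_true]
      split_ifs <;> first | (exfalso; omega) | ring1
    · have ha1 : (a:ℕ) ≠ i := fun h => h1 (Fin.ext h)
      have ha2 : (a:ℕ) ≠ i+1 := fun h => h2 (Fin.ext h)
      rw [Equiv.swap_apply_of_ne_of_ne h1 h2]
      simp only [if_pos rfl, one_mul, Fin.ext_iff, true_and, and_true]
      split_ifs <;> first | (exfalso; omega) | ring1
  · intro c _ hc
    simp [if_neg (Ne.symm hc)]
  · simp

private lemma BG_braid {K : Type*} [Field K] {n : ℕ} (a b c : Fin n) (hab : a ≠ b) (hbc : b ≠ c)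
    (hac : a ≠ c) (z₁ z₂ z₃ : K) :
    BG a b z₁ * BG b c z₂ * BG a b z₃ = BG b c z₃ * BG a b (z₂ - z₁ * z₃) * BG b c z₁ := by
  simp only [BG, sub_mul, add_mul, mul_sub, mul_add, one_mul, mul_one,
    Matrix.single_mul_single_same, Matrix.single_mul_single_of_ne,
    hab, hbc, hac, hab.symm, hbc.symm, hac.symm, Ne, not_false_iff,
    zero_mul, mul_zero, add_zero, zero_add, sub_zero, zero_sub]
  abel_nf
  simp only [← Matrix.single_add, neg_smul, one_smul]
  ring_nf
  abel

private lemma BG_comm {K : Type*} [Field K] {n : ℕ} (a b c d : Fin n) (hab : a ≠ b)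
    (hcd : c ≠ d) (hac : a ≠ c) (had : a ≠ d) (hbc : b ≠ c) (hbd : b ≠ d) (z w : K) :
    BG a b z * BG c d w = BG c d w * BG a b z := by
  simp only [BG, sub_mul, add_mul, mul_sub, mul_add, one_mul, mul_one,
    Matrix.single_mul_single_same, Matrix.single_mul_single_of_ne,
    hab, hcd, hac, had, hbc, hbd, hab.symm, hcd.symm, hac.symm, had.symm, hbc.symm, hbd.symm,
    Ne, not_false_iff, zero_mul, mul_zero, add_zero, zero_add, sub_zero, zero_sub]
  abel

end aux

set_option maxHeartbeats 1000000 in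
/-- The braid relations for the matrices `f_i(z)`:
`f_i(z₁) f_{i+1}(z₂) f_i(z₃) = f_{i+1}(z₃) f_i(z₂ - z₁z₃) f_{i+1}(z₁)` and
`f_i(z) f_j(w) = f_j(w) f_i(z)` for `|i - j| > 1`; hence `σ_i ↦ f_i` defines a
representation of the positive braid monoid `Br_n⁺` on parametrized families of
matrices. -/
theorem stmt_9 (K : Type*) [Field K] (n : ℕ) :
    (∀ (i : ℕ) (h : i + 1 + 1 < n) (z₁ z₂ z₃ : K),
      braidGen K n i (Nat.lt_of_succ_lt h) z₁ * braidGen K n (i + 1) h z₂ *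
          braidGen K n i (Nat.lt_of_succ_lt h) z₃
        = braidGen K n (i + 1) h z₃ *
            braidGen K n i (Nat.lt_of_succ_lt h) (z₂ - z₁ * z₃) *
            braidGen K n (i + 1) h z₁) ∧
    (∀ (i j : ℕ) (hi : i + 1 < n) (hj : j + 1 < n), (i + 1 < j ∨ j + 1 < i) →
      ∀ z w : K,
        braidGen K n i hi z * braidGen K n j hj w
          = braidGen K n j hj w * braidGen K n i hi z) := by
  constructor
  · intro i h z₁ z₂ z₃
    rw [braidGen_eq_BG, braidGen_eq_BG, braidGen_eq_BG, braidGen_eq_BG, braidGen_eq_BG,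
      braidGen_eq_BG]
    exact BG_braid _ _ _ (by simp [Fin.ext_iff]) (by simp [Fin.ext_iff])
      (by simp [Fin.ext_iff]; omega) z₁ z₂ z₃
  · intro i j hi hj hij z w
    rw [braidGen_eq_BG, braidGen_eq_BG]
    exact BG_comm _ _ _ _ (by simp [Fin.ext_iff]) (by simp [Fin.ext_iff])
      (by simp [Fin.ext_iff]; omega) (by simp [Fin.ext_iff]; omega)
      (by simp [Fin.ext_iff]; omega) (by simp [Fin.ext_iff]; omega) z w
end
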